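/- Let k ≥ 2 and let x_1, …, x_k be real numbers satisfying: x_1 > 0; x_i ≥ 0 for all i ∈ {1, …, k}; and x_i ≤ 2·max_{j ∈ {1, …, i−1}} x_j for all i ∈ {2, …, k}. Then for every m ∈ {1, …, k−1}, (1/m)·∑_{i=1}^{m} 2^{-i}·x_i ≥ (1/(m+1))·∑_{i=1}^{m+1} 2^{-i}·x_i. -/
import Mathlib


/-- For `k ≥ 2` and reals `x_1, …, x_k` with `x_1 > 0`, `x_i ≥ 0` for all
`i ∈ {1, …, k}`, and `x_i ≤ 2·max_{j ∈ {1, …, i−1}} x_j` for `i ∈ {2, …, k}`,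
for every `m ∈ {1, …, k−1}`:
`(1/m)·∑_{i=1}^{m} 2^{-i}·x_i ≥ (1/(m+1))·∑_{i=1}^{m+1} 2^{-i}·x_i`. -/
theorem stmt_9 (k : ℕ) (hk : 2 ≤ k) (x : ℕ → ℝ)
    (hx1 : 0 < x 1) (hx0 : ∀ i ∈ Finset.Icc 1 k, 0 ≤ x i)
    (hx2 : ∀ i, ∀ h2 : 2 ≤ i, i ≤ k →
      x i ≤ 2 * (Finset.Icc 1 (i - 1)).sup' (Finset.nonempty_Icc.mpr (by omega)) x)
    (m : ℕ) (hm : m ∈ Finset.Icc 1 (k - 1)) :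
    (1 / (m : ℝ)) * ∑ i ∈ Finset.Icc 1 m, (2 : ℝ) ^ (-(i : ℤ)) * x i ≥
      (1 / ((m : ℝ) + 1)) * ∑ i ∈ Finset.Icc 1 (m + 1), (2 : ℝ) ^ (-(i : ℤ)) * x i := by
  simp only [Finset.mem_Icc] at hm
  obtain ⟨hm1, hm2⟩ := hm
  -- key invariant
  have key : ∀ n, 1 ≤ n → n ≤ k → ∀ (h : (Finset.Icc 1 n).Nonempty),
      (n : ℝ) * (2 : ℝ) ^ (-(n : ℤ)) * (Finset.Icc 1 n).sup' h x ≤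
        ∑ i ∈ Finset.Icc 1 n, (2 : ℝ) ^ (-(i : ℤ)) * x i := by
    intro n
    induction n with
    | zero => omega
    | succ p ih =>
      intro h1 h2 hne
      rcases Nat.eq_zero_or_pos p with hp | hp
      · subst hp
        simp
      · -- p ≥ 1
        have hpk : p ≤ k := by omega
        have hpne : (Finset.Icc 1 p).Nonempty := Finset.nonempty_Icc.mpr (by omega)
        have ihp := ih hp hpk hpne
        have hMnn : 0 ≤ (Finset.Icc 1 p).sup' hpne x := by
          obtain ⟨j, hj, hje⟩ := Finset.exists_mem_eq_sup' hpne x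
          rw [hje]
          exact hx0 j (Finset.mem_Icc.mpr ⟨(Finset.mem_Icc.mp hj).1, by
            have := (Finset.mem_Icc.mp hj).2; omega⟩)
        have hxle : x (p + 1) ≤ 2 * (Finset.Icc 1 p).sup' hpne x := by
          have := hx2 (p + 1) (by omega) h2
          simpa using this
        have hsum : ∑ i ∈ Finset.Icc 1 (p + 1), (2 : ℝ) ^ (-(i : ℤ)) * x i
            = (∑ i ∈ Finset.Icc 1 p, (2 : ℝ) ^ (-(i : ℤ)) * x i)
              + (2 : ℝ) ^ (-((p : ℤ) + 1)) * x (p + 1) := by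
          rw [Finset.sum_Icc_succ_top (by omega)]
          push_cast
          ring_nf
        have hsup : (Finset.Icc 1 (p + 1)).sup' hne x
            ≤ max ((Finset.Icc 1 p).sup' hpne x) (x (p + 1)) := by
          apply Finset.sup'_le
          intro j hj
          rcases Finset.mem_Icc.mp hj with ⟨hj1, hj2⟩
          rcases Nat.lt_or_ge j (p + 1) with hlt | hge
          · exact le_max_of_le_left (Finset.le_sup' x (Finset.mem_Icc.mpr ⟨hj1, by omega⟩))
          · have : j = p + 1 := by omega
            subst this; exact le_max_right _ _
        have hpow : (0:ℝ) < (2 : ℝ) ^ (-((p:ℤ) + 1)) := by positivity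
        have hpowp : (0:ℝ) < (2 : ℝ) ^ (-(p:ℤ)) := by positivity
        have hpoweq : (2 : ℝ) ^ (-((p:ℤ))) = 2 * (2 : ℝ) ^ (-((p:ℤ) + 1)) := by
          rw [show -(p:ℤ) = 1 + -((p:ℤ)+1) by ring,
            zpow_add₀ (by norm_num : (2:ℝ) ≠ 0), zpow_one]
        have ihp' : (p:ℝ) * (2 * (2:ℝ)^(-((p:ℤ)+1))) * (Finset.Icc 1 p).sup' hpne x
            ≤ ∑ i ∈ Finset.Icc 1 p, (2 : ℝ) ^ (-(i : ℤ)) * x i := by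
          rw [← hpoweq]; exact ihp
        have hxnn : 0 ≤ x (p + 1) := hx0 _ (Finset.mem_Icc.mpr ⟨by omega, h2⟩)
        rcases le_or_gt (x (p + 1)) ((Finset.Icc 1 p).sup' hpne x) with hc | hc
        · -- max stays
          have hM : (Finset.Icc 1 (p + 1)).sup' hne x ≤ (Finset.Icc 1 p).sup' hpne x :=
            hsup.trans (by simp [hc])
          rw [hsum]
          push_cast
          have hp1 : (1:ℝ) ≤ (p:ℝ) := by exact_mod_cast hp
          nlinarith [mul_nonneg hpow.le hxnn, mul_le_mul_of_nonneg_left hM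
            (by positivity : (0:ℝ) ≤ ((p:ℝ)+1) * (2:ℝ)^(-((p:ℤ)+1))), ihp',
            mul_nonneg (mul_nonneg (by linarith : (0:ℝ) ≤ (p:ℝ)-1) hpow.le) hMnn]
        · have hM : (Finset.Icc 1 (p + 1)).sup' hne x ≤ x (p + 1) :=
            hsup.trans (by simp [hc.le])
          rw [hsum]
          push_cast
          nlinarith [mul_le_mul_of_nonneg_left hM
            (by positivity : (0:ℝ) ≤ ((p:ℝ)+1) * (2:ℝ)^(-((p:ℤ)+1))), ihp',
            mul_le_mul_of_nonneg_left hxle (by positivity : (0:ℝ) ≤ (p:ℝ) * (2:ℝ)^(-((p:ℤ)+1))),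
            mul_nonneg hpow.le hxnn]
  -- main
  have hmk : m + 1 ≤ k := by omega
  have hmne : (Finset.Icc 1 m).Nonempty := Finset.nonempty_Icc.mpr (by omega)
  have hkey := key m hm1 (by omega) hmne
  have hxle : x (m + 1) ≤ 2 * (Finset.Icc 1 m).sup' hmne x := by
    have := hx2 (m + 1) (by omega) hmk
    simpa using this
  have hsum : ∑ i ∈ Finset.Icc 1 (m + 1), (2 : ℝ) ^ (-(i : ℤ)) * x i
      = (∑ i ∈ Finset.Icc 1 m, (2 : ℝ) ^ (-(i : ℤ)) * x i)
        + (2 : ℝ) ^ (-((m : ℤ) + 1)) * x (m + 1) := by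
    rw [Finset.sum_Icc_succ_top (by omega)]
    push_cast; ring_nf
  have hpow : (0:ℝ) < (2 : ℝ) ^ (-((m:ℤ) + 1)) := by positivity
  have hpoweq : (2 : ℝ) ^ (-((m:ℤ))) = 2 * (2 : ℝ) ^ (-((m:ℤ) + 1)) := by
    rw [show -(m:ℤ) = 1 + -((m:ℤ)+1) by ring,
      zpow_add₀ (by norm_num : (2:ℝ) ≠ 0), zpow_one]
  have hkey' : (m:ℝ) * (2 * (2:ℝ)^(-((m:ℤ)+1))) * (Finset.Icc 1 m).sup' hmne x
      ≤ ∑ i ∈ Finset.Icc 1 m, (2 : ℝ) ^ (-(i : ℤ)) * x i := by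
    rw [← hpoweq]; exact hkey
  have hm0 : (0:ℝ) < (m:ℝ) := by exact_mod_cast hm1
  rw [ge_iff_le, one_div_mul_eq_div, one_div_mul_eq_div,
    div_le_div_iff₀ (by positivity) hm0]
  rw [hsum]
  nlinarith [mul_le_mul_of_nonneg_left hxle
    (by positivity : (0:ℝ) ≤ (m:ℝ) * (2:ℝ)^(-((m:ℤ)+1))), hkey']
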